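/- Let A be an m×m real matrix with nonnegative entries. Then every eigenvalue λ ∈ ℂ of A satisfies |λ| ≤ max_j Σ_{i=1}^m a_{i,j}, and there exists a real eigenvalue λ of A with λ ≥ min_j Σ_{i=1}^m a_{i,j}; that is, the spectral radius of A lies between the minimum and the maximum of the column sums of A. -/

import Mathlib

set_option maxHeartbeats 8000000


open Matrix

section Aux

variable {m : ℕ}

private lemma entry_le_linfty_norm' (X : Matrix (Fin m) (Fin m) ℝ) (i j : Fin m) :
    letI := Matrix.linftyOpNormedRing (α := ℝ) (n := Fin m); ‖X i j‖ ≤ ‖X‖ := by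
  letI := Matrix.linftyOpNormedRing (α := ℝ) (n := Fin m)
  rw [Matrix.linfty_opNorm_def]
  calc ‖X i j‖ ≤ ∑ k, ‖X i k‖ :=
        Finset.single_le_sum (f := fun k => ‖X i k‖) (fun _ _ => norm_nonneg _)
          (Finset.mem_univ j)
    _ ≤ _ := by
        have := Finset.le_sup (f := fun i => ∑ k, ‖X i k‖₊) (Finset.mem_univ i)
        have h2 : ((∑ k, ‖X i k‖₊ : NNReal) : ℝ) = ∑ k, ‖X i k‖ := by
          push_cast [coe_nnnorm]; rfl
        rw [← h2]
        exact_mod_cast this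

private lemma one_sub_inv_nonneg (X : Matrix (Fin m) (Fin m) ℝ)
    (hX : ∀ i j, 0 ≤ X i j) (hn : ∀ i, ∑ j, X i j < 1) :
    IsUnit (1 - X) ∧ ∀ i j, 0 ≤ Ring.inverse (1 - X) i j := by
  letI := Matrix.linftyOpSemiNormedRing (α := ℝ) (n := Fin m)
  letI := Matrix.linftyOpNormedRing (α := ℝ) (n := Fin m)
  letI := Matrix.linftyOpNormedAlgebra (R := ℝ) (α := ℝ) (n := Fin m)
  haveI : CompleteSpace (Matrix (Fin m) (Fin m) ℝ) := FiniteDimensional.complete ℝ _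
  have hnorm : ‖X‖ < 1 := by
    rw [Matrix.linfty_opNorm_def]
    have : (Finset.univ.sup fun i => ∑ j, ‖X i j‖₊) < 1 := by
      rw [Finset.sup_lt_iff (by norm_num)]
      intro i _
      have h0 : ((∑ j, ‖X i j‖₊ : NNReal) : ℝ) = ∑ j, X i j := by
        push_cast [coe_nnnorm]
        exact Finset.sum_congr rfl fun j _ => abs_of_nonneg (hX i j)
      have h1 := hn i
      rw [← h0] at h1
      exact_mod_cast h1
    exact_mod_cast this
  refine ⟨isUnit_one_sub_of_norm_lt_one hnorm, fun i j => ?_⟩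
  have hsum := hasSum_geom_series_inverse X hnorm
  let φ : Matrix (Fin m) (Fin m) ℝ →ₗ[ℝ] ℝ :=
    { toFun := fun M => M i j, map_add' := fun _ _ => rfl, map_smul' := fun _ _ => rfl }
  let φc : Matrix (Fin m) (Fin m) ℝ →L[ℝ] ℝ :=
    φ.mkContinuous 1 (fun M => (by simpa using entry_le_linfty_norm' M i j : ‖M i j‖ ≤ 1 * ‖M‖))
  have h2 : HasSum (fun n : ℕ => (X ^ n) i j) (Ring.inverse (1 - X) i j) := φc.hasSum hsum
  have hpow : ∀ n : ℕ, ∀ i j, 0 ≤ (X ^ n) i j := by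
    intro n
    induction n with
    | zero => intro i j; simp [Matrix.one_apply]; positivity
    | succ n ih =>
        intro i j
        rw [pow_succ, Matrix.mul_apply]
        exact Finset.sum_nonneg fun k _ => mul_nonneg (ih i k) (hX k j)
  exact hasSum_le (fun n => hpow n i j) hasSum_zero h2

end Aux

/-- For a nonnegative square real matrix, every complex eigenvalue has modulus at most the
maximal column sum, and there is a real eigenvalue at least as large as the minimal column
sum; i.e. the spectral radius lies between the minimal and maximal column sums. -/
theorem spectral_radius_between_column_sums
    (m : ℕ) (hm : 0 < m)
    (A : Matrix (Fin m) (Fin m) ℝ)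
    (hA_nonneg : ∀ i j, 0 ≤ A i j) :
    (∀ lam : ℂ, lam ∈ spectrum ℂ (A.map (algebraMap ℝ ℂ)) →
      ‖lam‖ ≤
        Finset.univ.sup' (Finset.univ_nonempty_iff.mpr ⟨⟨0, hm⟩⟩)
          (fun j => ∑ i, A i j)) ∧
    (∃ lam : ℝ, lam ∈ spectrum ℝ A ∧
      Finset.univ.inf' (Finset.univ_nonempty_iff.mpr ⟨⟨0, hm⟩⟩)
        (fun j => ∑ i, A i j) ≤ lam) := by
  constructor
  · -- Part 1: upper bound on eigenvalue moduli
    intro lam hlam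
    set M : Matrix (Fin m) (Fin m) ℂ := A.map (algebraMap ℝ ℂ) with hM
    have hdet : (lam • (1 : Matrix (Fin m) (Fin m) ℂ) - M).det = 0 := by
      rw [spectrum.mem_iff] at hlam
      rw [Algebra.algebraMap_eq_smul_one] at hlam
      by_contra hne
      exact hlam ((Matrix.isUnit_iff_isUnit_det _).mpr (isUnit_iff_ne_zero.mpr hne))
    have hdetT : (lam • (1 : Matrix (Fin m) (Fin m) ℂ) - Mᵀ).det = 0 := by
      have : (lam • (1 : Matrix (Fin m) (Fin m) ℂ) - M)ᵀ
          = lam • (1 : Matrix (Fin m) (Fin m) ℂ) - Mᵀ := by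
        rw [Matrix.transpose_sub, Matrix.transpose_smul, Matrix.transpose_one]
      rw [← this, Matrix.det_transpose]
      exact hdet
    obtain ⟨v, hv0, hv⟩ := (Matrix.exists_mulVec_eq_zero_iff).mpr hdetT
    have hev : Mᵀ *ᵥ v = lam • v := by
      have := hv
      rw [Matrix.sub_mulVec, sub_eq_zero] at this
      rw [← this, Matrix.smul_mulVec, Matrix.one_mulVec]
    obtain ⟨i, _, hi⟩ := Finset.exists_max_image Finset.univ
      (fun k => ‖v k‖) (Finset.univ_nonempty_iff.mpr ⟨⟨0, hm⟩⟩)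
    have hvi : 0 < ‖v i‖ := by
      obtain ⟨k, hk⟩ := Function.ne_iff.mp hv0
      calc 0 < ‖v k‖ := by
            simpa using (norm_pos_iff.mpr (by simpa using hk))
        _ ≤ ‖v i‖ := hi k (Finset.mem_univ k)
    have hrow : ‖lam‖ * ‖v i‖ ≤ (∑ j, A j i) * ‖v i‖ := by
      have h1 : lam * v i = ∑ j, (M j i) * v j := by
        have := congrFun hev i
        simp only [Matrix.mulVec, dotProduct, Pi.smul_apply, smul_eq_mul] at this
        rw [← this]
        simp [Matrix.transpose_apply]
      calc ‖lam‖ * ‖v i‖ = ‖lam * v i‖ := (norm_mul _ _).symm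
        _ = ‖∑ j, (M j i) * v j‖ := by rw [h1]
        _ ≤ ∑ j, ‖(M j i) * v j‖ := by
            exact norm_sum_le _ _
        _ = ∑ j, A j i * ‖v j‖ := by
            refine Finset.sum_congr rfl fun j _ => ?_
            rw [norm_mul]
            congr 1
            simp [hM, Matrix.map_apply, Complex.norm_real, abs_of_nonneg (hA_nonneg j i)]
        _ ≤ ∑ j, A j i * ‖v i‖ := by
            refine Finset.sum_le_sum fun j _ => ?_
            exact mul_le_mul_of_nonneg_left (hi j (Finset.mem_univ j)) (hA_nonneg j i)
        _ = (∑ j, A j i) * ‖v i‖ := by rw [Finset.sum_mul]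
    have := le_of_mul_le_mul_right hrow hvi
    exact this.trans (Finset.le_sup' (fun j => ∑ k, A k j) (Finset.mem_univ i))
  · -- Part 2: real eigenvalue at least the minimal column sum
    set c : ℝ := Finset.univ.inf' (Finset.univ_nonempty_iff.mpr ⟨⟨0, hm⟩⟩)
        (fun j => ∑ i, A i j) with hc
    by_contra hcon
    push_neg at hcon
    set B : Matrix (Fin m) (Fin m) ℝ := Aᵀ with hB
    have hB_nonneg : ∀ i j, 0 ≤ B i j := fun i j => hA_nonneg j i
    have hd : ∀ t : ℝ, c ≤ t → IsUnit (t • (1 : Matrix (Fin m) (Fin m) ℝ) - B).det := by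
      intro t ht
      have hts : t ∉ spectrum ℝ A := fun hmem => absurd (hcon t hmem) (not_lt.mpr ht)
      have : IsUnit (t • (1 : Matrix (Fin m) (Fin m) ℝ) - A) := by
        rw [spectrum.notMem_iff, Algebra.algebraMap_eq_smul_one] at hts
        exact hts
      have hdetA := (Matrix.isUnit_iff_isUnit_det _).mp this
      have hTT : (t • (1 : Matrix (Fin m) (Fin m) ℝ) - A)ᵀ
          = t • (1 : Matrix (Fin m) (Fin m) ℝ) - B := by
        rw [Matrix.transpose_sub, Matrix.transpose_smul, Matrix.transpose_one]
      rw [← hTT, Matrix.det_transpose]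
      exact hdetA
    -- basic inverse facts
    have hmulinv : ∀ t : ℝ, c ≤ t →
        (t • (1 : Matrix (Fin m) (Fin m) ℝ) - B) * (t • 1 - B)⁻¹ = 1 :=
      fun t ht => Matrix.mul_nonsing_inv _ (hd t ht)
    have hinvmul : ∀ t : ℝ, c ≤ t →
        ((t • (1 : Matrix (Fin m) (Fin m) ℝ) - B))⁻¹ * (t • 1 - B) = 1 :=
      fun t ht => Matrix.nonsing_inv_mul _ (hd t ht)
    -- base case: for large s the resolvent is nonnegative
    have base : ∀ s : ℝ, (∑ i, ∑ j, B i j) + 1 ≤ s → c ≤ s →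
        ∀ i j, 0 ≤ ((s • (1 : Matrix (Fin m) (Fin m) ℝ) - B)⁻¹) i j := by
      intro s hs hcs i j
      have hBsum : (0:ℝ) ≤ ∑ i, ∑ j, B i j :=
        Finset.sum_nonneg fun i _ => Finset.sum_nonneg fun j _ => hB_nonneg i j
      have hspos : (0:ℝ) < s := by linarith
      set X : Matrix (Fin m) (Fin m) ℝ := s⁻¹ • B with hXdef
      have hX : ∀ i j, 0 ≤ X i j := fun i j => by
        simpa [hXdef] using mul_nonneg (inv_nonneg.mpr hspos.le) (hB_nonneg i j)
      have hn : ∀ i, ∑ j, X i j < 1 := by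
        intro i
        have hrow : ∑ j, B i j ≤ ∑ i, ∑ j, B i j :=
          Finset.single_le_sum (f := fun i => ∑ j, B i j)
            (fun i _ => Finset.sum_nonneg fun j _ => hB_nonneg i j) (Finset.mem_univ i)
        have : ∑ j, X i j = s⁻¹ * ∑ j, B i j := by
          simp [hXdef, Finset.mul_sum]
        rw [this, inv_mul_lt_iff₀ hspos, mul_one]
        linarith
      obtain ⟨hu, hge⟩ := one_sub_inv_nonneg X hX hn
      have hfact : s • (1 : Matrix (Fin m) (Fin m) ℝ) - B = s • (1 - X) := by
        rw [smul_sub, hXdef, smul_smul, mul_inv_cancel₀ hspos.ne', one_smul]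
      have hright : (s • (1 : Matrix (Fin m) (Fin m) ℝ) - B) *
          (s⁻¹ • Ring.inverse (1 - X)) = 1 := by
        rw [hfact, Matrix.smul_mul, Matrix.mul_smul, smul_smul,
          mul_inv_cancel₀ hspos.ne', one_smul, Ring.mul_inverse_cancel _ hu]
      rw [Matrix.inv_eq_right_inv hright, Matrix.smul_apply]
      exact mul_nonneg (inv_nonneg.mpr hspos.le) (hge i j) |>.trans_eq (by simp)
    -- the set of thresholds above which the resolvent is nonnegative
    set V : Set ℝ := {t | c ≤ t ∧ ∀ s : ℝ, t ≤ s →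
      ∀ i j, 0 ≤ ((s • (1 : Matrix (Fin m) (Fin m) ℝ) - B)⁻¹) i j} with hVdef
    set T : ℝ := max c ((∑ i, ∑ j, B i j) + 1) with hTdef
    have hTV : T ∈ V := by
      refine ⟨le_max_left _ _, fun s hs i j => ?_⟩
      exact base s (le_trans (le_max_right _ _) hs) (le_trans (le_max_left _ _) hs) i j
    have hVne : V.Nonempty := ⟨T, hTV⟩
    have hVbdd : BddBelow V := ⟨c, fun t ht => ht.1⟩
    set t0 : ℝ := sInf V with ht0def
    have hct0 : c ≤ t0 := le_csInf hVne fun t ht => ht.1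
    have hPgt : ∀ s : ℝ, t0 < s →
        ∀ i j, 0 ≤ ((s • (1 : Matrix (Fin m) (Fin m) ℝ) - B)⁻¹) i j := by
      intro s hs i j
      obtain ⟨t, htV, hts⟩ := exists_lt_of_csInf_lt hVne hs
      exact htV.2 s hts.le i j
    -- the resolvent is nonnegative at t0 by continuity
    have hPt0 : ∀ i j, 0 ≤ ((t0 • (1 : Matrix (Fin m) (Fin m) ℝ) - B)⁻¹) i j := by
      intro i j
      have h1 : Continuous fun t : ℝ => t • (1 : Matrix (Fin m) (Fin m) ℝ) - B :=
        (continuous_id.smul continuous_const).sub continuous_const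
      have hdetne : (t0 • (1 : Matrix (Fin m) (Fin m) ℝ) - B).det ≠ 0 := by
        have := hd t0 hct0
        exact this.ne_zero
      have hca : ContinuousAt
          (fun t : ℝ => ((t • (1 : Matrix (Fin m) (Fin m) ℝ) - B)⁻¹) i j) t0 := by
        have heq : (fun t : ℝ => ((t • (1 : Matrix (Fin m) (Fin m) ℝ) - B)⁻¹) i j)
            = fun t : ℝ => ((t • (1 : Matrix (Fin m) (Fin m) ℝ) - B).det)⁻¹ *
              ((t • (1 : Matrix (Fin m) (Fin m) ℝ) - B).adjugate i j) := by
          funext t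
          rw [Matrix.inv_def, Matrix.smul_apply, smul_eq_mul, Ring.inverse_eq_inv']
        rw [heq]
        exact (h1.matrix_det.continuousAt.inv₀ hdetne).mul
          ((h1.matrix_adjugate.matrix_elem i j).continuousAt)
      refine ge_of_tendsto (hca.continuousWithinAt (s := Set.Ioi t0)) ?_
      filter_upwards [self_mem_nhdsWithin] with s hs
      exact hPgt s hs i j
    have ht0V : t0 ∈ V := by
      refine ⟨hct0, fun s hs i j => ?_⟩
      rcases eq_or_lt_of_le hs with h | h
      · exact h ▸ hPt0 i j
      · exact hPgt s h i j
    -- t0 must equal c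
    have ht0c : t0 = c := by
      by_contra hne
      have hclt : c < t0 := lt_of_le_of_ne hct0 (Ne.symm hne)
      set R : Matrix (Fin m) (Fin m) ℝ := (t0 • 1 - B)⁻¹ with hRdef
      set Srow : ℝ := ∑ i, ∑ j, R i j with hSdef
      have hSnn : (0:ℝ) ≤ Srow :=
        Finset.sum_nonneg fun i _ => Finset.sum_nonneg fun j _ => hPt0 i j
      set δ : ℝ := min ((t0 - c)/2) (1/(Srow+1)) with hδdef
      have hδpos : 0 < δ := lt_min (by linarith) (by positivity)
      set t1 : ℝ := t0 - δ with ht1def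
      have ht1c : c ≤ t1 := by
        have := min_le_left ((t0 - c)/2) (1/(Srow+1))
        simp only [ht1def]; linarith [this]
      have hneu : ∀ s : ℝ, t1 ≤ s → s < t0 →
          ∀ i j, 0 ≤ ((s • (1 : Matrix (Fin m) (Fin m) ℝ) - B)⁻¹) i j := by
        intro s hs1 hs2
        set e : ℝ := t0 - s with hedef
        have he1 : 0 < e := by simp only [hedef]; linarith
        have he2 : e ≤ δ := by have := hs1; rw [ht1def] at this; simp only [hedef]; linarith
        set X : Matrix (Fin m) (Fin m) ℝ := e • R with hXdef
        have hX : ∀ i j, 0 ≤ X i j := fun i j => by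
          simpa [hXdef] using mul_nonneg he1.le (hPt0 i j)
        have hn : ∀ i, ∑ j, X i j < 1 := by
          intro i
          have hrow : ∑ j, R i j ≤ Srow :=
            Finset.single_le_sum (f := fun i => ∑ j, R i j)
              (fun i _ => Finset.sum_nonneg fun j _ => hPt0 i j) (Finset.mem_univ i)
          have hXr : ∑ j, X i j = e * ∑ j, R i j := by
            simp [hXdef, Finset.mul_sum]
          have hrownn : (0:ℝ) ≤ ∑ j, R i j :=
            Finset.sum_nonneg fun j _ => hPt0 i j
          have hδle : δ ≤ 1/(Srow+1) := min_le_right _ _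
          calc ∑ j, X i j = e * ∑ j, R i j := hXr
            _ ≤ δ * Srow := mul_le_mul he2 hrow hrownn hδpos.le
            _ ≤ (1/(Srow+1)) * Srow := mul_le_mul_of_nonneg_right hδle hSnn
            _ < 1 := by
                rw [one_div, inv_mul_lt_iff₀ (by positivity), mul_one]
                linarith
        obtain ⟨hu, hge⟩ := one_sub_inv_nonneg X hX hn
        have hfact : s • (1 : Matrix (Fin m) (Fin m) ℝ) - B
            = (t0 • 1 - B) * (1 - X) := by
          rw [mul_sub, mul_one, hXdef, mul_smul_comm, hmulinv t0 hct0]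
          have hs1' : s • (1 : Matrix (Fin m) (Fin m) ℝ) = t0 • 1 - e • 1 := by
            rw [← sub_smul]
            congr 1
            simp only [hedef]; ring
          rw [hs1']
          abel
        have hright : (s • (1 : Matrix (Fin m) (Fin m) ℝ) - B) *
            (Ring.inverse (1 - X) * R) = 1 := by
          rw [hfact, mul_assoc, ← mul_assoc (1 - X), Ring.mul_inverse_cancel _ hu,
            one_mul, hmulinv t0 hct0]
        rw [Matrix.inv_eq_right_inv hright]
        intro i j
        rw [Matrix.mul_apply]
        exact Finset.sum_nonneg fun k _ => mul_nonneg (hge i k) (hPt0 k j)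
      have ht1V : t1 ∈ V := by
        refine ⟨ht1c, fun s hs i j => ?_⟩
        rcases lt_or_ge s t0 with h | h
        · exact hneu s hs h i j
        · exact ht0V.2 s h i j
      have := csInf_le hVbdd ht1V
      rw [← ht0def] at this
      simp only [ht1def] at this
      linarith
    -- derive the contradiction using the all-ones vector
    have hPc : ∀ i j, 0 ≤ ((c • (1 : Matrix (Fin m) (Fin m) ℝ) - B)⁻¹) i j := by
      intro i j
      have := hPt0 i j
      rwa [ht0c] at this
    clear hPgt ht0V hPt0 hmulinv base hTV hcon hd hct0 ht0c
    clear_value t0 V T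
    clear ht0def t0 hVbdd hVne hVdef V hTdef T
    clear_value c B
    obtain ⟨v, hvdef⟩ : ∃ v : Fin m → ℝ, v = fun _ => 1 := ⟨_, rfl⟩
    have hsplit : (c • (1 : Matrix (Fin m) (Fin m) ℝ) - B) *ᵥ v = c • v - B *ᵥ v := by
      rw [Matrix.sub_mulVec, Matrix.smul_mulVec, Matrix.one_mulVec]
    have hBv : ∀ i, (B *ᵥ v) i = ∑ j, B i j := by
      intro i
      show ∑ j, B i j * v j = ∑ j, B i j
      exact Finset.sum_congr rfl fun j _ => by rw [hvdef]; exact mul_one _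
    have hw : ∀ i, ((c • (1 : Matrix (Fin m) (Fin m) ℝ) - B) *ᵥ v) i ≤ 0 := by
      intro i
      have hcol : c ≤ ∑ j, B i j := by
        have he : (∑ k, A k i) = ∑ j, B i j := by
          rw [hB]
          exact Finset.sum_congr rfl fun k _ => rfl
        rw [← he, hc]
        exact Finset.inf'_le (fun j => ∑ k, A k j) (Finset.mem_univ i)
      have : ((c • (1 : Matrix (Fin m) (Fin m) ℝ) - B) *ᵥ v) i
          = c - ∑ j, B i j := by
        rw [hsplit, Pi.sub_apply, Pi.smul_apply, hBv i, hvdef]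
        norm_num
      rw [this]
      linarith
    have hone : ((c • (1 : Matrix (Fin m) (Fin m) ℝ) - B)⁻¹ *ᵥ
        ((c • (1 : Matrix (Fin m) (Fin m) ℝ) - B) *ᵥ v)) = v := by
      rw [Matrix.mulVec_mulVec, hinvmul c le_rfl, Matrix.one_mulVec]
    have hcontr : (1:ℝ) ≤ 0 := by
      have h0 := congrFun hone ⟨0, hm⟩
      calc (1:ℝ) = ((c • (1 : Matrix (Fin m) (Fin m) ℝ) - B)⁻¹ *ᵥ
            ((c • (1 : Matrix (Fin m) (Fin m) ℝ) - B) *ᵥ v)) ⟨0, hm⟩ := by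
            rw [h0, hvdef]
        _ = ∑ j, ((c • (1 : Matrix (Fin m) (Fin m) ℝ) - B)⁻¹) ⟨0, hm⟩ j *
              ((c • (1 : Matrix (Fin m) (Fin m) ℝ) - B) *ᵥ v) j := rfl
        _ ≤ 0 := Finset.sum_nonpos fun j _ =>
            mul_nonpos_of_nonneg_of_nonpos (hPc _ j) (hw j)
    linarith
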